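/- For a nondegenerate triangle with interior angles α, β, γ at v₁, v₂, v₃, the circumcenter c is expressed in the basis of edge vectors at v₁ as c = v₁ + a·(v₂−v₁) + b·(v₃−v₁) with a = cos(β)/(2 sin(γ) sin(α)) and b = cos(γ)/(2 sin(β) sin(α)). -/

import Mathlib

noncomputable section

open RealInnerProductSpace

def det2 (a b : EuclideanSpace ℝ (Fin 2)) : ℝ := a 0 * b 1 - a 1 * b 0

lemma inner2 (x y : EuclideanSpace ℝ (Fin 2)) :
    (inner ℝ x y : ℝ) = x 0 * y 0 + x 1 * y 1 := by
  simp [PiLp.inner_apply, Fin.sum_univ_two, RCLike.inner_apply, mul_comm]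

lemma norm_sq2 (x : EuclideanSpace ℝ (Fin 2)) : ‖x‖ ^ 2 = x 0 ^ 2 + x 1 ^ 2 := by
  rw [← real_inner_self_eq_norm_sq, inner2]; ring

lemma angle_eq (a b c : EuclideanSpace ℝ (Fin 2)) :
    EuclideanGeometry.angle a b c = InnerProductGeometry.angle (a - b) (c - b) := rfl

set_option maxRecDepth 8000 in
set_option maxHeartbeats 1000000 in
/-- For a nondegenerate triangle with interior angles `α, β, γ` at `v₁, v₂, v₃`,
the circumcenter is `c = v₁ + a·(v₂−v₁) + b·(v₃−v₁)` with
`a = cos(β)/(2 sin(γ) sin(α))` and `b = cos(γ)/(2 sin(β) sin(α))`. -/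
theorem circumcenter_barycentric_expression
    (v₁ v₂ v₃ : EuclideanSpace ℝ (Fin 2))
    (hA : det2 (v₂ - v₁) (v₃ - v₁) ≠ 0)
    (c : EuclideanSpace ℝ (Fin 2))
    (hc₁ : ‖c - v₁‖ = ‖c - v₂‖) (hc₂ : ‖c - v₂‖ = ‖c - v₃‖)
    (α β γ : ℝ)
    (hα : α = EuclideanGeometry.angle v₂ v₁ v₃)
    (hβ : β = EuclideanGeometry.angle v₁ v₂ v₃)
    (hγ : γ = EuclideanGeometry.angle v₂ v₃ v₁) :
    c = v₁ + (Real.cos β / (2 * Real.sin γ * Real.sin α)) • (v₂ - v₁)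
          + (Real.cos γ / (2 * Real.sin β * Real.sin α)) • (v₃ - v₁) := by
  have hu : v₂ - v₁ ≠ 0 := by intro h; exact hA (by rw [h]; simp [det2])
  have hw : v₃ - v₁ ≠ 0 := by intro h; exact hA (by rw [h]; simp [det2])
  have he : v₃ - v₂ ≠ 0 := by
    intro h; exact hA (by rw [sub_eq_zero.mp h]; unfold det2; ring)
  have hnu : (0:ℝ) < ‖v₂ - v₁‖ := norm_pos_iff.mpr hu
  have hnw : (0:ℝ) < ‖v₃ - v₁‖ := norm_pos_iff.mpr hw
  have hne : (0:ℝ) < ‖v₃ - v₂‖ := norm_pos_iff.mpr he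
  have hA' : (v₂ 0 - v₁ 0) * (v₃ 1 - v₁ 1) - (v₂ 1 - v₁ 1) * (v₃ 0 - v₁ 0) ≠ 0 := by
    simpa [det2, PiLp.sub_apply] using hA
  -- norms squared in coordinates
  have hnu2 : ‖v₂ - v₁‖ ^ 2 = (v₂ 0 - v₁ 0) ^ 2 + (v₂ 1 - v₁ 1) ^ 2 := by
    rw [norm_sq2]; simp only [PiLp.sub_apply]
  have hnw2 : ‖v₃ - v₁‖ ^ 2 = (v₃ 0 - v₁ 0) ^ 2 + (v₃ 1 - v₁ 1) ^ 2 := by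
    rw [norm_sq2]; simp only [PiLp.sub_apply]
  have hne2 : ‖v₃ - v₂‖ ^ 2 =
      ((v₃ 0 - v₁ 0) - (v₂ 0 - v₁ 0)) ^ 2 + ((v₃ 1 - v₁ 1) - (v₂ 1 - v₁ 1)) ^ 2 := by
    rw [norm_sq2]; simp only [PiLp.sub_apply]; ring
  -- circumcenter linear equations
  have sq1 : ‖c - v₁‖ ^ 2 = ‖c - v₂‖ ^ 2 := by rw [hc₁]
  have sq2 : ‖c - v₁‖ ^ 2 = ‖c - v₃‖ ^ 2 := by rw [hc₁, hc₂]
  rw [norm_sq2, norm_sq2] at sq1 sq2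
  simp only [PiLp.sub_apply] at sq1 sq2
  have e₁ : 2 * ((c 0 - v₁ 0) * (v₂ 0 - v₁ 0) + (c 1 - v₁ 1) * (v₂ 1 - v₁ 1)) =
      (v₂ 0 - v₁ 0) ^ 2 + (v₂ 1 - v₁ 1) ^ 2 := by linear_combination sq1
  have e₂ : 2 * ((c 0 - v₁ 0) * (v₃ 0 - v₁ 0) + (c 1 - v₁ 1) * (v₃ 1 - v₁ 1)) =
      (v₃ 0 - v₁ 0) ^ 2 + (v₃ 1 - v₁ 1) ^ 2 := by linear_combination sq2
  -- trig products
  have hsa : Real.sin α * (‖v₂ - v₁‖ * ‖v₃ - v₁‖) =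
      |(v₂ 0 - v₁ 0) * (v₃ 1 - v₁ 1) - (v₂ 1 - v₁ 1) * (v₃ 0 - v₁ 0)| := by
    rw [hα, angle_eq, InnerProductGeometry.sin_angle_mul_norm_mul_norm,
      show (⟪v₂ - v₁, v₂ - v₁⟫ * ⟪v₃ - v₁, v₃ - v₁⟫ -
          ⟪v₂ - v₁, v₃ - v₁⟫ * ⟪v₂ - v₁, v₃ - v₁⟫ : ℝ) =
        ((v₂ 0 - v₁ 0) * (v₃ 1 - v₁ 1) - (v₂ 1 - v₁ 1) * (v₃ 0 - v₁ 0)) ^ 2 by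
          simp only [inner2, PiLp.sub_apply]; ring,
      Real.sqrt_sq_eq_abs]
  have hsb : Real.sin β * (‖v₂ - v₁‖ * ‖v₃ - v₂‖) =
      |(v₂ 0 - v₁ 0) * (v₃ 1 - v₁ 1) - (v₂ 1 - v₁ 1) * (v₃ 0 - v₁ 0)| := by
    rw [norm_sub_rev v₂ v₁, hβ, angle_eq,
      InnerProductGeometry.sin_angle_mul_norm_mul_norm,
      show (⟪v₁ - v₂, v₁ - v₂⟫ * ⟪v₃ - v₂, v₃ - v₂⟫ -
          ⟪v₁ - v₂, v₃ - v₂⟫ * ⟪v₁ - v₂, v₃ - v₂⟫ : ℝ) =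
        ((v₂ 0 - v₁ 0) * (v₃ 1 - v₁ 1) - (v₂ 1 - v₁ 1) * (v₃ 0 - v₁ 0)) ^ 2 by
          simp only [inner2, PiLp.sub_apply]; ring,
      Real.sqrt_sq_eq_abs]
  have hsg : Real.sin γ * (‖v₃ - v₂‖ * ‖v₃ - v₁‖) =
      |(v₂ 0 - v₁ 0) * (v₃ 1 - v₁ 1) - (v₂ 1 - v₁ 1) * (v₃ 0 - v₁ 0)| := by
    rw [norm_sub_rev v₃ v₂, norm_sub_rev v₃ v₁, hγ, angle_eq,
      InnerProductGeometry.sin_angle_mul_norm_mul_norm,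
      show (⟪v₂ - v₃, v₂ - v₃⟫ * ⟪v₁ - v₃, v₁ - v₃⟫ -
          ⟪v₂ - v₃, v₁ - v₃⟫ * ⟪v₂ - v₃, v₁ - v₃⟫ : ℝ) =
        ((v₂ 0 - v₁ 0) * (v₃ 1 - v₁ 1) - (v₂ 1 - v₁ 1) * (v₃ 0 - v₁ 0)) ^ 2 by
          simp only [inner2, PiLp.sub_apply]; ring,
      Real.sqrt_sq_eq_abs]
  have hcb : Real.cos β * (‖v₂ - v₁‖ * ‖v₃ - v₂‖) =
      ((v₂ 0 - v₁ 0) ^ 2 + (v₂ 1 - v₁ 1) ^ 2) -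
        ((v₂ 0 - v₁ 0) * (v₃ 0 - v₁ 0) + (v₂ 1 - v₁ 1) * (v₃ 1 - v₁ 1)) := by
    have h := InnerProductGeometry.cos_angle_mul_norm_mul_norm (v₁ - v₂) (v₃ - v₂)
    rw [inner2] at h
    simp only [PiLp.sub_apply] at h
    rw [norm_sub_rev v₂ v₁, hβ, angle_eq]
    linear_combination h
  have hcg : Real.cos γ * (‖v₃ - v₂‖ * ‖v₃ - v₁‖) =
      ((v₃ 0 - v₁ 0) ^ 2 + (v₃ 1 - v₁ 1) ^ 2) -
        ((v₂ 0 - v₁ 0) * (v₃ 0 - v₁ 0) + (v₂ 1 - v₁ 1) * (v₃ 1 - v₁ 1)) := by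
    have h := InnerProductGeometry.cos_angle_mul_norm_mul_norm (v₂ - v₃) (v₁ - v₃)
    rw [inner2] at h
    simp only [PiLp.sub_apply] at h
    rw [norm_sub_rev v₃ v₂, norm_sub_rev v₃ v₁, hγ, angle_eq]
    linear_combination h
  -- abbreviations
  set u0 := v₂ 0 - v₁ 0 with hu0
  set u1 := v₂ 1 - v₁ 1 with hu1
  set w0 := v₃ 0 - v₁ 0 with hw0
  set w1 := v₃ 1 - v₁ 1 with hw1
  set d := u0 * w1 - u1 * w0 with hdd
  set nu := ‖v₂ - v₁‖ with hnudef
  set nw := ‖v₃ - v₁‖ with hnwdef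
  set ne := ‖v₃ - v₂‖ with hnedef
  set D := |d| with hDdef
  have hD : D ≠ 0 := abs_ne_zero.mpr hA'
  have hDsq : D ^ 2 = d ^ 2 := sq_abs d
  have hd' : u0 * w1 - u1 * w0 ≠ 0 := hA'
  clear_value u0 u1 w0 w1 nu nw ne D
  clear_value d
  -- division forms
  have hsa' : Real.sin α = D / (nu * nw) := by
    rw [eq_div_iff (mul_pos hnu hnw).ne']; exact hsa
  have hsb' : Real.sin β = D / (nu * ne) := by
    rw [eq_div_iff (mul_pos hnu hne).ne']; exact hsb
  have hsg' : Real.sin γ = D / (ne * nw) := by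
    rw [eq_div_iff (mul_pos hne hnw).ne']; exact hsg
  have hcb' : Real.cos β = ((u0 ^ 2 + u1 ^ 2) - (u0 * w0 + u1 * w1)) / (nu * ne) := by
    rw [eq_div_iff (mul_pos hnu hne).ne']; exact hcb
  have hcg' : Real.cos γ = ((w0 ^ 2 + w1 ^ 2) - (u0 * w0 + u1 * w1)) / (ne * nw) := by
    rw [eq_div_iff (mul_pos hne hnw).ne']; exact hcg
  have ha : Real.cos β / (2 * Real.sin γ * Real.sin α) =
      (w0 ^ 2 + w1 ^ 2) * ((u0 ^ 2 + u1 ^ 2) - (u0 * w0 + u1 * w1)) / (2 * d ^ 2) := by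
    rw [hcb', hsg', hsa']
    field_simp
    linear_combination
      (((u0 ^ 2 + u1 ^ 2) - (u0 * w0 + u1 * w1)) * d ^ 2) * hnw2 +
      (-(((u0 ^ 2 + u1 ^ 2) - (u0 * w0 + u1 * w1)) * (w0 ^ 2 + w1 ^ 2))) * hDsq
  have hb : Real.cos γ / (2 * Real.sin β * Real.sin α) =
      (u0 ^ 2 + u1 ^ 2) * ((w0 ^ 2 + w1 ^ 2) - (u0 * w0 + u1 * w1)) / (2 * d ^ 2) := by
    rw [hcg', hsb', hsa']
    field_simp
    linear_combination
      (((w0 ^ 2 + w1 ^ 2) - (u0 * w0 + u1 * w1)) * d ^ 2) * hnu2 +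
      (-(((w0 ^ 2 + w1 ^ 2) - (u0 * w0 + u1 * w1)) * (u0 ^ 2 + u1 ^ 2))) * hDsq
  rw [ha, hb]
  ext i
  fin_cases i
  · simp only [Fin.mk_zero, Fin.mk_one, PiLp.add_apply, PiLp.smul_apply, PiLp.sub_apply, smul_eq_mul]
    rw [← hu0, ← hw0, hdd]
    have hd'' : w1 * u0 - w0 * u1 ≠ 0 := by contrapose! hd'; linarith
    field_simp
    linear_combination ((u0 * w1 - u1 * w0) * w1) * e₁ - ((u0 * w1 - u1 * w0) * u1) * e₂
  · simp only [Fin.mk_zero, Fin.mk_one, PiLp.add_apply, PiLp.smul_apply, PiLp.sub_apply, smul_eq_mul]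
    rw [← hu1, ← hw1, hdd]
    have hd'' : w1 * u0 - w0 * u1 ≠ 0 := by contrapose! hd'; linarith
    field_simp
    linear_combination ((u0 * w1 - u1 * w0) * u0) * e₂ - ((u0 * w1 - u1 * w0) * w0) * e₁
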